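/- Let V and Q be real inner product spaces with norms ‖·‖_D on V and ‖·‖ on Q, and let b : V × Q → ℝ be bilinear. Assume: (i) for every q ∈ Q there exists w_q ∈ V with ‖w_q‖_D = 1 and b(w_q, q) ≥ μβ₁‖q‖ for some constants μ > 0, β₁ ∈ (0,1]; (ii) |⟪v, w⟫_D| ≤ ‖v‖_D‖w‖_D. Define a₂((v,q),(w,r)) = ⟪v,w⟫_D − b(v,r) + b(w,q). Then for every nonzero (v,q), sup over nonzero (w,r) of a₂((v,q),(w,r)) / (‖(v,q)‖_D ‖(w,r)‖_D) ≥ (μβ₁)²/(1+μβ₁)², where ‖(v,q)‖_D² = ‖v‖_D² + ‖q‖². -/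

import Mathlib

open scoped RealInnerProductSpace

private lemma stmt6_aux2 (y s m : ℝ) (hy : 0 ≤ y) (hs0 : 0 < s) (hm0 : 0 < m)
    (hy2 : (1 + 2 * m) * s ^ 2 < y ^ 2 * (1 + m) ^ 2) :
    (1 + 2 * m) * s ≤ y * (1 + m) ^ 2 := by
  by_contra hcon
  push_neg at hcon
  have hp1 : (y * (1 + m) ^ 2) ^ 2 < ((1 + 2 * m) * s) ^ 2 :=
    pow_lt_pow_left₀ hcon (mul_nonneg hy (sq_nonneg _)) (by norm_num)
  nlinarith [mul_pos (mul_pos hs0 hs0)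
    (mul_pos (mul_pos hm0 hm0) (by linarith : (0:ℝ) < 1 + 2 * m)),
    mul_lt_mul_of_pos_left hy2 (by positivity : (0:ℝ) < (1 + m) ^ 2)]

private lemma stmt6_aux3 (x y s m K : ℝ) (hm0 : 0 < m) (hm1 : (0:ℝ) < 1 + m) (hs0 : 0 < s)
    (hKs : m * y - x ≤ K * s) (hA : x * (1 + m) < m * s)
    (hB : (1 + 2 * m) * s ≤ y * (1 + m) ^ 2) : m ^ 2 ≤ K * (1 + m) ^ 2 := by
  have k1 := mul_le_mul_of_nonneg_right hKs (sq_nonneg (1 + m))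
  have k2 := mul_le_mul_of_nonneg_left hB hm0.le
  have k3 := mul_lt_mul_of_pos_right hA hm1
  have key : m ^ 2 * s ≤ K * s * (1 + m) ^ 2 := by nlinarith [k1, k2, k3]
  have key2 : m ^ 2 * s ≤ (K * (1 + m) ^ 2) * s := by linarith [key]
  exact le_of_mul_le_mul_right key2 hs0

private lemma stmt6_aux1 (x y m : ℝ) (hc : x ^ 2 * (1 + m) ^ 2 < m ^ 2 * (x ^ 2 + y ^ 2)) :
    (1 + 2 * m) * (x ^ 2 + y ^ 2) < y ^ 2 * (1 + m) ^ 2 := by nlinarith [hc]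

/-- Inf-sup stability of the diagonalized system (Lemma 4.4): with
`a₂((v,q),(w,r)) = ⟪v,w⟫_D − b(v,r) + b(w,q)` and the inf-sup hypothesis
`∀ q, ∃ w, ‖w‖_D = 1 ∧ b(w,q) ≥ μβ₁‖q‖`, for every nonzero `(v,q)` the sup over
nonzero `(w,r)` of `a₂((v,q),(w,r))/(‖(v,q)‖_D‖(w,r)‖_D)` is at least
`(μβ₁)²/(1+μβ₁)²`, where `‖(v,q)‖_D² = ‖v‖_D² + ‖q‖²`. -/
theorem stmt6
    {V Q : Type*} [NormedAddCommGroup V] [InnerProductSpace ℝ V]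
    [NormedAddCommGroup Q] [InnerProductSpace ℝ Q]
    (b : V →ₗ[ℝ] Q →ₗ[ℝ] ℝ) (μ β₁ : ℝ) (hμ : 0 < μ) (hβ₁0 : 0 < β₁) (hβ₁1 : β₁ ≤ 1)
    (hinfsup : ∀ q : Q, ∃ w : V, ‖w‖ = 1 ∧ μ * β₁ * ‖q‖ ≤ b w q)
    (a₂ : (V × Q) → (V × Q) → ℝ)
    (ha₂ : ∀ v q w r, a₂ (v, q) (w, r) = ⟪v, w⟫ - b v r + b w q)
    (v : V) (q : Q) (hvq : (v, q) ≠ 0) :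
    ∀ K : ℝ,
      (∀ w : V, ∀ r : Q, (w, r) ≠ (0, 0) →
        a₂ (v, q) (w, r) ≤
          K * Real.sqrt (‖v‖ ^ 2 + ‖q‖ ^ 2) * Real.sqrt (‖w‖ ^ 2 + ‖r‖ ^ 2)) →
      (μ * β₁) ^ 2 / (1 + μ * β₁) ^ 2 ≤ K := by
  intro K hK
  set m := μ * β₁ with hmdef
  have hm0 : 0 < m := mul_pos hμ hβ₁0
  have hm1 : (0:ℝ) < 1 + m := by linarith
  set x := ‖v‖ with hxdef
  set y := ‖q‖ with hydef
  have hx : 0 ≤ x := norm_nonneg v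
  have hy : 0 ≤ y := norm_nonneg q
  have hvq' : v ≠ 0 ∨ q ≠ 0 := by
    by_contra h
    push_neg at h
    exact hvq (by simp [h.1, h.2, Prod.ext_iff])
  have hs2 : 0 < x ^ 2 + y ^ 2 := by
    rcases hvq' with h | h
    · have : 0 < x := norm_pos_iff.mpr h
      nlinarith [sq_nonneg y]
    · have : 0 < y := norm_pos_iff.mpr h
      nlinarith [sq_nonneg x]
  set s := Real.sqrt (x ^ 2 + y ^ 2) with hsdef
  have hs0 : 0 < s := Real.sqrt_pos.mpr hs2
  have hs : s ^ 2 = x ^ 2 + y ^ 2 := Real.sq_sqrt hs2.le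
  -- first test function: (v, q) itself
  have h1 : x ^ 2 ≤ K * s * s := by
    have h := hK v q hvq
    rw [ha₂] at h
    have e : ⟪v, v⟫ - b v q + b v q = x ^ 2 := by
      rw [real_inner_self_eq_norm_sq]; ring
    rw [e] at h
    exact h
  rw [div_le_iff₀ (by positivity)]
  by_cases hc : m ^ 2 * (x ^ 2 + y ^ 2) ≤ x ^ 2 * (1 + m) ^ 2
  · -- case 1: x is large
    nlinarith [sq_nonneg (1 + m), mul_pos hs0 hs0]
  · push_neg at hc
    -- case 2: y is large; use second test function (y • w, 0)
    have hy0 : 0 < y := by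
      rcases hy.lt_or_eq with h | h
      · exact h
      · exfalso; rw [← h] at hc; nlinarith [sq_nonneg x]
    obtain ⟨w, hw1, hwb⟩ := hinfsup q
    have hwn : ‖y • w‖ = y := by
      rw [norm_smul, Real.norm_eq_abs, abs_of_nonneg hy, hw1, mul_one]
    have hwz : y • w ≠ 0 := by
      intro h
      rw [h, norm_zero] at hwn
      exact hy0.ne hwn
    have hwne : (y • w, (0:Q)) ≠ (0, 0) := by
      intro h
      exact hwz (congrArg Prod.fst h)
    have h2 := hK (y • w) 0 hwne
    rw [ha₂] at h2
    have e2 : ⟪v, y • w⟫ - b v 0 + b (y • w) q = y * ⟪v, w⟫ + y * b w q := by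
      rw [real_inner_smul_right]
      simp only [map_zero, map_smul, LinearMap.smul_apply, smul_eq_mul]
      ring
    rw [e2, hwn] at h2
    have hns : Real.sqrt (y ^ 2 + ‖(0:Q)‖ ^ 2) = y := by
      simp [Real.sqrt_sq hy]
    rw [hns] at h2
    have hcs : -x ≤ ⟪v, w⟫ := by
      have := abs_real_inner_le_norm v w
      rw [hw1, mul_one] at this
      cases abs_le.mp this with
      | intro h _ => linarith
    -- from h2: y * (m * y) - y * x ≤ K * s * y
    have hKs : m * y - x ≤ K * s := by
      have hlow : y * (m * y) + y * (-x) ≤ K * s * y := by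
        calc y * (m * y) + y * (-x) ≤ y * b w q + y * ⟪v, w⟫ := by
              apply add_le_add
              · exact mul_le_mul_of_nonneg_left hwb hy
              · exact mul_le_mul_of_nonneg_left hcs hy
          _ = y * ⟪v, w⟫ + y * b w q := by ring
          _ ≤ K * s * y := h2
      have := (mul_le_mul_iff_of_pos_right hy0).mp (by linarith : (m * y - x) * y ≤ K * s * y)
      linarith
    -- derive x * (1 + m) < m * s
    have hA : x * (1 + m) < m * s := by
      by_contra hcon
      push_neg at hcon
      have := mul_le_mul hcon hcon (mul_pos hm0 hs0).le (mul_nonneg hx hm1.le)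
      nlinarith [hs]
    -- derive (1 + 2m) * s ≤ y * (1 + m)^2
    have hy2 : (1 + 2 * m) * s ^ 2 < y ^ 2 * (1 + m) ^ 2 := by
      rw [hs]; exact stmt6_aux1 x y m hc
    have hB : (1 + 2 * m) * s ≤ y * (1 + m) ^ 2 := stmt6_aux2 y s m hy hs0 hm0 hy2
    exact stmt6_aux3 x y s m K hm0 hm1 hs0 hKs hA hB
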